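/- Let X ∈ ℝ^{nd×Kd} satisfy: (a) there is a clustering function C of [n] into K clusters of size m such that μ(X)_{iC(i)} − μ(X)_{ij} ≥ δ > 0 for all i ∈ [n] and all j ≠ C(i); and (b) for each i, the block X_{iC(i)} = η_i·R_i with η_i ≥ η > 0 and R_i ∈ O(d). Then for any X' ∈ ℝ^{nd×Kd}, any minimizer W of ‖·−X‖_F over F, and any minimizer W' of ‖·−X'‖_F over F, one has ‖W − W'‖_F ≤ 2·√(d²/δ² + 1/η²) · ‖X − X'‖_F. -/

import Mathlib

open Matrix BigOperators Finset

/-- Frobenius norm of a real matrix. -/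
noncomputable def frobNorm {a b : Type*} [Fintype a] [Fintype b]
    (X : Matrix a b ℝ) : ℝ :=
  Real.sqrt (∑ i, ∑ j, X i j ^ 2)

/-- `Q` belongs to the real orthogonal group `O(d)`. -/
def IsOrthoMat {d : ℕ} (Q : Matrix (Fin d) (Fin d) ℝ) : Prop :=
  Q * Qᵀ = 1 ∧ Qᵀ * Q = 1

/-- `Q` belongs to the special orthogonal group `SO(d)`. -/
def IsSpecOrthoMat {d : ℕ} (Q : Matrix (Fin d) (Fin d) ℝ) : Prop :=
  IsOrthoMat Q ∧ Q.det = 1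

/-- The `(i,j)`-th `d × d` block of a block matrix. -/
def blockOf {n K d : ℕ} (X : Matrix (Fin n × Fin d) (Fin K × Fin d) ℝ)
    (i : Fin n) (j : Fin K) : Matrix (Fin d) (Fin d) ℝ :=
  fun a b => X (i, a) (j, b)

/-- The singular values of a real `d × d` matrix: square roots of the
eigenvalues of the Gram matrix `Xᴴ X`. -/
noncomputable def singVals {d : ℕ} (X : Matrix (Fin d) (Fin d) ℝ) : Fin d → ℝ :=
  fun k => Real.sqrt (((by have h := Matrix.isHermitian_conjTranspose_mul_self X; rwa [Matrix.conjTranspose_eq_transpose_of_trivial] at h : (Xᵀ * X).IsHermitian)).eigenvalues k)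

/-- Nuclear norm: the sum of the singular values. -/
noncomputable def nuclearNorm {d : ℕ} (X : Matrix (Fin d) (Fin d) ℝ) : ℝ :=
  ∑ k, singVals X k

/-- The map `μ` sending `X` to its `n × K` matrix of blockwise nuclear norms. -/
noncomputable def muMap {n K d : ℕ} (X : Matrix (Fin n × Fin d) (Fin K × Fin d) ℝ) :
    Matrix (Fin n) (Fin K) ℝ :=
  fun i j => nuclearNorm (blockOf X i j)

/-- `H` is a clustering matrix: 0/1 entries, each row sums to 1, each column sums to `m`. -/
def IsClusteringMatrix {n K : ℕ} (m : ℕ) (H : Matrix (Fin n) (Fin K) ℝ) : Prop :=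
  (∀ i j, H i j = 0 ∨ H i j = 1) ∧ (∀ i, ∑ j, H i j = 1) ∧ (∀ j, ∑ i, H i j = (m : ℝ))

/-- `V = (1_{1×K} ⊗ R) ⊙ (H ⊗ 1_{d×d})`: the `(i,j)`-th `d × d` block is `H i j • R i`. -/
def buildV {n K d : ℕ} (R : Fin n → Matrix (Fin d) (Fin d) ℝ)
    (H : Matrix (Fin n) (Fin K) ℝ) : Matrix (Fin n × Fin d) (Fin K × Fin d) ℝ :=
  fun p q => H p.1 q.1 * R p.1 p.2 q.2

/-- Membership in the set `F` (resp. `E` if `G = SO(d)`): `V` is built from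
blocks `R i ∈ G` and a clustering matrix `H`. -/
def InFeas {n K d : ℕ} (m : ℕ) (G : Matrix (Fin d) (Fin d) ℝ → Prop)
    (V : Matrix (Fin n × Fin d) (Fin K × Fin d) ℝ) : Prop :=
  ∃ (R : Fin n → Matrix (Fin d) (Fin d) ℝ) (H : Matrix (Fin n) (Fin K) ℝ),
    (∀ i, G (R i)) ∧ IsClusteringMatrix m H ∧ V = buildV R H

/-- Membership in `F`: blocks in `O(d)`. -/
def InF {n K d : ℕ} (m : ℕ) (V : Matrix (Fin n × Fin d) (Fin K × Fin d) ℝ) : Prop :=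
  InFeas m IsOrthoMat V

/-- Membership in `P_K(G)`: `M = bdiag(U₁,…,U_K) (P ⊗ I_d)` with `U_k ∈ G`
and `P` a permutation matrix, i.e. the `(a,b)` block of `M` is `U a` if `a = π b`, else `0`. -/
def InPK {K d : ℕ} (G : Matrix (Fin d) (Fin d) ℝ → Prop)
    (M : Matrix (Fin K × Fin d) (Fin K × Fin d) ℝ) : Prop :=
  ∃ (U : Fin K → Matrix (Fin d) (Fin d) ℝ) (π : Equiv.Perm (Fin K)),
    (∀ k, G (U k)) ∧ ∀ p q, M p q = if p.1 = π q.1 then U p.1 p.2 q.2 else 0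

/-- `dist_G(V₁,V₂) = min_{Q ∈ P_K(G)} ‖V₁ - V₂ Q‖_F` (the minimum is attained
since `P_K(G)` is compact; we express it as an infimum). -/
noncomputable def distG {n K d : ℕ} (G : Matrix (Fin d) (Fin d) ℝ → Prop)
    (V₁ V₂ : Matrix (Fin n × Fin d) (Fin K × Fin d) ℝ) : ℝ :=
  sInf {r | ∃ Q, InPK G Q ∧ r = frobNorm (V₁ - V₂ * Q)}

/-- Estimation error `ε_G(V)` with respect to a ground truth `Vstar`. -/
noncomputable def epsG {n K d : ℕ} (G : Matrix (Fin d) (Fin d) ℝ → Prop)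
    (Vstar V : Matrix (Fin n × Fin d) (Fin K × Fin d) ℝ) : ℝ :=
  distG G V Vstar

/- ===== auxiliary lemmas ===== -/

section AuxLemmas

open Finset

private lemma sum_expand' {ι : Type*} [Fintype ι] (f g : ι → ℝ) :
    ∑ i, (f i - g i) * (f i - g i)
      = ∑ i, f i * f i - 2 * ∑ i, f i * g i + ∑ i, g i * g i := by
  calc ∑ i, (f i - g i) * (f i - g i)
      = ∑ i, (f i * f i - 2 * (f i * g i) + g i * g i) :=
        Finset.sum_congr rfl fun i _ => by ring
    _ = _ := by rw [Finset.sum_add_distrib, Finset.sum_sub_distrib, ← Finset.mul_sum]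

private lemma sum2_expand' {ι κ : Type*} [Fintype ι] [Fintype κ] (f g : ι → κ → ℝ) :
    ∑ a, ∑ b, (f a b - g a b) * (f a b - g a b)
      = ∑ a, ∑ b, f a b * f a b - 2 * ∑ a, ∑ b, f a b * g a b
        + ∑ a, ∑ b, g a b * g a b := by
  calc ∑ a, ∑ b, (f a b - g a b) * (f a b - g a b)
      = ∑ a, (∑ b, f a b * f a b - 2 * ∑ b, f a b * g a b + ∑ b, g a b * g a b) :=
        Finset.sum_congr rfl fun a _ => sum_expand' _ _
    _ = _ := by rw [Finset.sum_add_distrib, Finset.sum_sub_distrib, ← Finset.mul_sum]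

private lemma dot_sq_eq {d : ℕ} (M : Matrix (Fin d) (Fin d) ℝ) (v : Fin d → ℝ) :
    (M *ᵥ v) ⬝ᵥ (M *ᵥ v) = v ⬝ᵥ ((Mᵀ * M) *ᵥ v) := by
  rw [← Matrix.mulVec_mulVec, Matrix.dotProduct_mulVec v, Matrix.vecMul_transpose]

private lemma trace_le_nuclear {d : ℕ} (Q A : Matrix (Fin d) (Fin d) ℝ) (hQ : IsOrthoMat Q) :
    ∑ a, ∑ b, Q a b * A a b ≤ nuclearNorm A := by
  classical
  set hB := (by have h := Matrix.isHermitian_conjTranspose_mul_self A; rwa [Matrix.conjTranspose_eq_transpose_of_trivial] at h : (Aᵀ * A).IsHermitian) with hBdef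
  set v : Fin d → Fin d → ℝ := fun k => ⇑(hB.eigenvectorBasis k) with hv
  have hnorm : ∀ k, ∑ a, v k a ^ 2 = 1 := by
    intro k
    have h1 : ‖hB.eigenvectorBasis k‖ = 1 := hB.eigenvectorBasis.orthonormal.1 k
    have h2 : ‖hB.eigenvectorBasis k‖ = Real.sqrt (∑ a, ‖v k a‖ ^ 2) :=
      EuclideanSpace.norm_eq _
    rw [h1] at h2
    have := Real.sqrt_eq_one.mp h2.symm
    simpa [Real.norm_eq_abs, sq_abs] using this
  have hUU : ∀ a b, (∑ k, v k a * v k b) = (1 : Matrix (Fin d) (Fin d) ℝ) a b := by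
    intro a b
    have h : (hB.eigenvectorUnitary : Matrix (Fin d) (Fin d) ℝ) *
        star (hB.eigenvectorUnitary : Matrix (Fin d) (Fin d) ℝ) = 1 :=
      Matrix.mem_unitaryGroup_iff.mp hB.eigenvectorUnitary.2
    have h2 := congrFun (congrFun h a) b
    simpa [Matrix.mul_apply, Matrix.star_apply, hv] using h2
  have key : ∀ k, (Q *ᵥ v k) ⬝ᵥ (A *ᵥ v k) ≤ Real.sqrt (hB.eigenvalues k) := by
    intro k
    have cs : ∑ c, (Q *ᵥ v k) c * (A *ᵥ v k) c ≤
        Real.sqrt (∑ c, (Q *ᵥ v k) c ^ 2) * Real.sqrt (∑ c, (A *ᵥ v k) c ^ 2) :=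
      Real.sum_mul_le_sqrt_mul_sqrt _ _ _
    have hq : ∑ c, (Q *ᵥ v k) c ^ 2 = 1 := by
      have h1 := dot_sq_eq Q (v k)
      rw [hQ.2, Matrix.one_mulVec] at h1
      calc ∑ c, (Q *ᵥ v k) c ^ 2 = (Q *ᵥ v k) ⬝ᵥ (Q *ᵥ v k) := by simp [dotProduct, sq]
        _ = v k ⬝ᵥ v k := h1
        _ = ∑ a, v k a ^ 2 := by simp [dotProduct, sq]
        _ = 1 := hnorm k
    have ha : ∑ c, (A *ᵥ v k) c ^ 2 = hB.eigenvalues k := by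
      have h1 := dot_sq_eq A (v k)
      have heig : (Aᵀ * A) *ᵥ v k = hB.eigenvalues k • v k := hB.mulVec_eigenvectorBasis k
      rw [heig] at h1
      calc ∑ c, (A *ᵥ v k) c ^ 2 = (A *ᵥ v k) ⬝ᵥ (A *ᵥ v k) := by simp [dotProduct, sq]
        _ = v k ⬝ᵥ (hB.eigenvalues k • v k) := h1
        _ = hB.eigenvalues k * ∑ a, v k a ^ 2 := by
            simp only [dotProduct, Pi.smul_apply, smul_eq_mul, Finset.mul_sum]
            exact Finset.sum_congr rfl fun a _ => by ring
        _ = hB.eigenvalues k := by rw [hnorm k, mul_one]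
    calc (Q *ᵥ v k) ⬝ᵥ (A *ᵥ v k) = ∑ c, (Q *ᵥ v k) c * (A *ᵥ v k) c := rfl
      _ ≤ _ := cs
      _ = Real.sqrt (hB.eigenvalues k) := by rw [hq, ha, Real.sqrt_one, one_mul]
  have expand : ∑ k, (Q *ᵥ v k) ⬝ᵥ (A *ᵥ v k) = ∑ a, ∑ b, Q a b * A a b := by
    have step : ∀ c k, (Q *ᵥ v k) c * (A *ᵥ v k) c
        = ∑ a, ∑ b, Q c a * A c b * (v k a * v k b) := by
      intro c k
      simp only [Matrix.mulVec, dotProduct, Finset.sum_mul_sum]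
      exact Finset.sum_congr rfl fun a _ => Finset.sum_congr rfl fun b _ => by ring
    calc ∑ k, (Q *ᵥ v k) ⬝ᵥ (A *ᵥ v k)
        = ∑ k, ∑ c, ∑ a, ∑ b, Q c a * A c b * (v k a * v k b) := by
          refine Finset.sum_congr rfl fun k _ => ?_
          exact Finset.sum_congr rfl fun c _ => step c k
      _ = ∑ c, ∑ a, ∑ b, Q c a * A c b * (∑ k, v k a * v k b) := by
          rw [Finset.sum_comm]
          refine Finset.sum_congr rfl fun c _ => ?_
          rw [Finset.sum_comm]
          refine Finset.sum_congr rfl fun a _ => ?_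
          rw [Finset.sum_comm]
          refine Finset.sum_congr rfl fun b _ => ?_
          rw [Finset.mul_sum]
      _ = ∑ a, ∑ b, Q a b * A a b := by
          refine Finset.sum_congr rfl fun c _ => ?_
          simp [hUU, Matrix.one_apply, mul_ite]
  calc ∑ a, ∑ b, Q a b * A a b = ∑ k, (Q *ᵥ v k) ⬝ᵥ (A *ᵥ v k) := expand.symm
    _ ≤ ∑ k, Real.sqrt (hB.eigenvalues k) := Finset.sum_le_sum fun k _ => key k
    _ = nuclearNorm A := rfl

private lemma nuclear_smul_ortho {d : ℕ} {c : ℝ} (hc : 0 ≤ c) {R : Matrix (Fin d) (Fin d) ℝ}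
    (hR : IsOrthoMat R) : nuclearNorm (c • R) = c * d := by
  classical
  set hB := (by have h := Matrix.isHermitian_conjTranspose_mul_self (c • R); rwa [Matrix.conjTranspose_eq_transpose_of_trivial] at h : ((c • R)ᵀ * (c • R)).IsHermitian) with hBdef
  have hBeq : (c • R)ᴴ * (c • R) = (c ^ 2) • (1 : Matrix (Fin d) (Fin d) ℝ) := by
    have hct : (c • R)ᴴ = c • Rᵀ := by
      ext a b; simp [Matrix.conjTranspose_apply, Matrix.transpose_apply]
    rw [hct, Matrix.smul_mul, Matrix.mul_smul, hR.2, smul_smul, sq]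
  have key : ∀ (lam : ℝ) (w : Fin d → ℝ), w ≠ 0 →
      ((c • R)ᴴ * (c • R)) *ᵥ w = lam • w → lam = c ^ 2 := by
    intro lam w hw hEq
    rw [hBeq, Matrix.smul_mulVec, Matrix.one_mulVec] at hEq
    obtain ⟨a, ha⟩ := Function.ne_iff.mp hw
    have h3 := congrFun hEq a
    simp only [Pi.smul_apply, smul_eq_mul, Pi.zero_apply] at h3 ha
    have h4 : (c ^ 2 - lam) * w a = 0 := by rw [sub_mul, h3]; ring
    rcases mul_eq_zero.mp h4 with h | h
    · linarith
    · exact absurd h ha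
  have hev : ∀ k, hB.eigenvalues k = c ^ 2 := by
    intro k
    have heig : ((c • R)ᴴ * (c • R)) *ᵥ ⇑(hB.eigenvectorBasis k)
        = hB.eigenvalues k • ⇑(hB.eigenvectorBasis k) := hB.mulVec_eigenvectorBasis k
    have hnz : ⇑(hB.eigenvectorBasis k) ≠ 0 := by
      intro h0
      have h1 : ‖hB.eigenvectorBasis k‖ = 1 := hB.eigenvectorBasis.orthonormal.1 k
      have h2 : hB.eigenvectorBasis k = 0 := by
        ext a; exact congrFun h0 a
      rw [h2, norm_zero] at h1
      exact zero_ne_one h1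
    exact key _ _ hnz heig
  have hsv : ∀ k, singVals (c • R) k = c := by
    intro k
    show Real.sqrt (hB.eigenvalues k) = c
    rw [hev k, Real.sqrt_sq hc]
  rw [nuclearNorm]
  simp [hsv, Finset.sum_const, Finset.card_univ, mul_comm]

private lemma ortho_sum_mul {d : ℕ} {R : Matrix (Fin d) (Fin d) ℝ} (hR : IsOrthoMat R) :
    ∑ a, ∑ b, R a b * R a b = (d : ℝ) := by
  have h : ∀ b : Fin d, ∑ a, R a b * R a b = 1 := by
    intro b
    have h2 := congrFun (congrFun hR.2 b) b
    simpa [Matrix.mul_apply, Matrix.one_apply, Matrix.transpose_apply] using h2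
  rw [Finset.sum_comm]
  simp [h]

private lemma nuclearNorm_ortho {d : ℕ} {R : Matrix (Fin d) (Fin d) ℝ} (hR : IsOrthoMat R) :
    nuclearNorm R = (d : ℝ) := by
  have h := nuclear_smul_ortho (zero_le_one) hR
  rwa [one_smul, one_mul] at h

private lemma ortho_inner_le {d : ℕ} {Q R : Matrix (Fin d) (Fin d) ℝ}
    (hQ : IsOrthoMat Q) (hR : IsOrthoMat R) :
    ∑ a, ∑ b, Q a b * R a b ≤ (d : ℝ) := by
  have h := trace_le_nuclear Q R hQ
  rwa [nuclearNorm_ortho hR] at h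

/-- entrywise inner product of two block matrices -/
private noncomputable def inp {n K d : ℕ}
    (X Y : Matrix (Fin n × Fin d) (Fin K × Fin d) ℝ) : ℝ :=
  ∑ p, ∑ q, X p q * Y p q

private lemma inp_blocks {n K d : ℕ} (X Y : Matrix (Fin n × Fin d) (Fin K × Fin d) ℝ) :
    inp X Y = ∑ i, ∑ j, ∑ a, ∑ b, X (i, a) (j, b) * Y (i, a) (j, b) := by
  rw [inp]
  simp only [Fintype.sum_prod_type]
  exact Finset.sum_congr rfl fun i _ => Finset.sum_comm

private lemma frob_sq {n K d : ℕ} (Y : Matrix (Fin n × Fin d) (Fin K × Fin d) ℝ) :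
    frobNorm Y ^ 2 = inp Y Y := by
  rw [frobNorm, Real.sq_sqrt, inp]
  · exact Finset.sum_congr rfl fun p _ => Finset.sum_congr rfl fun q _ => pow_two _
  · exact Finset.sum_nonneg fun p _ => Finset.sum_nonneg fun q _ => sq_nonneg _

private lemma inp_le_frob {n K d : ℕ} (X Y : Matrix (Fin n × Fin d) (Fin K × Fin d) ℝ) :
    inp X Y ≤ frobNorm X * frobNorm Y := by
  have e1 : inp X Y = ∑ z : (Fin n × Fin d) × (Fin K × Fin d), X z.1 z.2 * Y z.1 z.2 := by
    rw [inp]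
    exact (Fintype.sum_prod_type (f := fun z : (Fin n × Fin d) × (Fin K × Fin d) =>
      X z.1 z.2 * Y z.1 z.2)).symm
  have e2 : frobNorm X = Real.sqrt (∑ z : (Fin n × Fin d) × (Fin K × Fin d), X z.1 z.2 ^ 2) := by
    rw [frobNorm]
    congr 1
    exact (Fintype.sum_prod_type (f := fun z : (Fin n × Fin d) × (Fin K × Fin d) =>
      X z.1 z.2 ^ 2)).symm
  have e3 : frobNorm Y = Real.sqrt (∑ z : (Fin n × Fin d) × (Fin K × Fin d), Y z.1 z.2 ^ 2) := by
    rw [frobNorm]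
    congr 1
    exact (Fintype.sum_prod_type (f := fun z : (Fin n × Fin d) × (Fin K × Fin d) =>
      Y z.1 z.2 ^ 2)).symm
  rw [e1, e2, e3]
  exact Real.sum_mul_le_sqrt_mul_sqrt _ _ _

private lemma frob_sub_sq {n K d : ℕ} (U Y : Matrix (Fin n × Fin d) (Fin K × Fin d) ℝ) :
    frobNorm (U - Y) ^ 2 = inp U U - 2 * inp U Y + inp Y Y := by
  rw [frob_sq, inp, inp, inp, inp]
  simp only [Matrix.sub_apply]
  exact sum2_expand' _ _

private lemma inp_sub_sub {n K d : ℕ} (U V Y Z : Matrix (Fin n × Fin d) (Fin K × Fin d) ℝ) :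
    inp (U - V) (Y - Z) = inp U Y - inp U Z - inp V Y + inp V Z := by
  rw [inp, inp, inp, inp, inp]
  simp only [Matrix.sub_apply, sub_mul, mul_sub, Finset.sum_sub_distrib]
  ring

private lemma min_to_inner {n K d : ℕ} {Y V1 V2 : Matrix (Fin n × Fin d) (Fin K × Fin d) ℝ}
    (h1 : inp V1 V1 = inp V2 V2)
    (hmin : frobNorm (V1 - Y) ≤ frobNorm (V2 - Y)) : inp V2 Y ≤ inp V1 Y := by
  have e1 := frob_sub_sq V1 Y
  have e2 := frob_sub_sq V2 Y
  have hsq : frobNorm (V1 - Y) ^ 2 ≤ frobNorm (V2 - Y) ^ 2 :=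
    pow_le_pow_left₀ (Real.sqrt_nonneg _) hmin 2
  rw [e1, e2] at hsq
  linarith

private lemma buildV_inp {n K d : ℕ} (R S : Fin n → Matrix (Fin d) (Fin d) ℝ)
    (H G : Matrix (Fin n) (Fin K) ℝ) :
    inp (buildV R H) (buildV S G)
      = ∑ i, ∑ j, (H i j * G i j) * (∑ a, ∑ b, R i a b * S i a b) := by
  rw [inp_blocks]
  refine Finset.sum_congr rfl fun i _ => Finset.sum_congr rfl fun j _ => ?_
  rw [Finset.mul_sum]
  refine Finset.sum_congr rfl fun a _ => ?_
  rw [Finset.mul_sum]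
  refine Finset.sum_congr rfl fun b _ => ?_
  show (H i j * R i a b) * (G i j * S i a b) = _
  ring

private lemma buildV_inp_X {n K d : ℕ} (R : Fin n → Matrix (Fin d) (Fin d) ℝ)
    (H : Matrix (Fin n) (Fin K) ℝ) (X : Matrix (Fin n × Fin d) (Fin K × Fin d) ℝ) :
    inp (buildV R H) X = ∑ i, ∑ j, H i j * (∑ a, ∑ b, R i a b * X (i, a) (j, b)) := by
  rw [inp_blocks]
  refine Finset.sum_congr rfl fun i _ => Finset.sum_congr rfl fun j _ => ?_
  rw [Finset.mul_sum]
  refine Finset.sum_congr rfl fun a _ => ?_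
  rw [Finset.mul_sum]
  refine Finset.sum_congr rfl fun b _ => ?_
  show (H i j * R i a b) * X (i, a) (j, b) = _
  ring

private lemma buildV_norm {n K d m : ℕ} {R : Fin n → Matrix (Fin d) (Fin d) ℝ}
    {H : Matrix (Fin n) (Fin K) ℝ} (hR : ∀ i, IsOrthoMat (R i))
    (hH : IsClusteringMatrix m H) :
    inp (buildV R H) (buildV R H) = (n : ℝ) * d := by
  rw [buildV_inp]
  have h : ∀ i, ∑ j, (H i j * H i j) * (∑ a, ∑ b, R i a b * R i a b) = (d : ℝ) := by
    intro i
    have h2 : ∀ j, H i j * H i j = H i j := fun j => by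
      rcases hH.1 i j with h | h <;> rw [h] <;> ring
    calc ∑ j, (H i j * H i j) * (∑ a, ∑ b, R i a b * R i a b)
        = ∑ j, H i j * d := by
          refine Finset.sum_congr rfl fun j _ => ?_
          rw [h2 j, ortho_sum_mul (hR i)]
      _ = (d : ℝ) := by rw [← Finset.sum_mul, hH.2.1 i, one_mul]
  rw [Finset.sum_congr rfl fun i _ => h i, Finset.sum_const, Finset.card_univ,
    Fintype.card_fin, nsmul_eq_mul]

private lemma inner_upper {n K d m : ℕ}
    (X : Matrix (Fin n × Fin d) (Fin K × Fin d) ℝ) (C : Fin n → Fin K)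
    (δ : ℝ)
    (hsep : ∀ i j, j ≠ C i → δ ≤ muMap X i (C i) - muMap X i j)
    (ηi : Fin n → ℝ) (Ri : Fin n → Matrix (Fin d) (Fin d) ℝ)
    (hηi0 : ∀ i, 0 ≤ ηi i) (hRi : ∀ i, IsOrthoMat (Ri i))
    (hblk : ∀ i, blockOf X i (C i) = ηi i • Ri i)
    (R : Fin n → Matrix (Fin d) (Fin d) ℝ) (H : Matrix (Fin n) (Fin K) ℝ)
    (hR : ∀ i, IsOrthoMat (R i)) (hH : IsClusteringMatrix m H) :
    inp (buildV R H) X ≤ ∑ i, (H i (C i) * (ηi i * (∑ a, ∑ b, R i a b * Ri i a b))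
      + (1 - H i (C i)) * (ηi i * d - δ)) := by
  classical
  rw [buildV_inp_X]
  refine Finset.sum_le_sum fun i _ => ?_
  set t : Fin K → ℝ := fun j => ∑ a, ∑ b, R i a b * X (i, a) (j, b) with ht
  have htC : t (C i) = ηi i * (∑ a, ∑ b, R i a b * Ri i a b) := by
    rw [ht]
    simp only
    rw [Finset.mul_sum]
    refine Finset.sum_congr rfl fun a _ => ?_
    rw [Finset.mul_sum]
    refine Finset.sum_congr rfl fun b _ => ?_
    have hX : X (i, a) (C i, b) = ηi i * Ri i a b := by
      have h := congrFun (congrFun (hblk i) a) b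
      simpa [blockOf, Matrix.smul_apply, smul_eq_mul] using h
    rw [hX]; ring
  have hmuC : muMap X i (C i) = ηi i * d := by
    show nuclearNorm (blockOf X i (C i)) = _
    rw [hblk i, nuclear_smul_ortho (hηi0 i) (hRi i)]
  have htle : ∀ j, j ≠ C i → t j ≤ ηi i * d - δ := by
    intro j hj
    have h1 : t j ≤ muMap X i j := trace_le_nuclear (R i) (blockOf X i j) (hR i)
    have h2 := hsep i j hj
    linarith
  have hsplit : ∑ j, H i j * t j
      = H i (C i) * t (C i) + ∑ j ∈ Finset.univ.erase (C i), H i j * t j :=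
    (Finset.add_sum_erase Finset.univ (fun j => H i j * t j) (Finset.mem_univ (C i))).symm
  have herase : ∑ j ∈ Finset.univ.erase (C i), H i j = 1 - H i (C i) := by
    have h := Finset.add_sum_erase Finset.univ (fun j => H i j) (Finset.mem_univ (C i))
    rw [hH.2.1 i] at h
    linarith
  have hbound : ∑ j ∈ Finset.univ.erase (C i), H i j * t j
      ≤ (1 - H i (C i)) * (ηi i * d - δ) := by
    rw [← herase, Finset.sum_mul]
    refine Finset.sum_le_sum fun j hj => ?_
    have hne : j ≠ C i := Finset.ne_of_mem_erase hj
    have hHnn : 0 ≤ H i j := by rcases hH.1 i j with h | h <;> rw [h] <;> norm_num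
    exact mul_le_mul_of_nonneg_left (htle j hne) hHnn
  calc ∑ j, H i j * t j
      = H i (C i) * t (C i) + ∑ j ∈ Finset.univ.erase (C i), H i j * t j := hsplit
    _ ≤ H i (C i) * (ηi i * (∑ a, ∑ b, R i a b * Ri i a b))
        + (1 - H i (C i)) * (ηi i * d - δ) := by rw [htC]; linarith

private lemma inp_W0 {n K d : ℕ}
    (X : Matrix (Fin n × Fin d) (Fin K × Fin d) ℝ) (C : Fin n → Fin K)
    (ηi : Fin n → ℝ) (Ri : Fin n → Matrix (Fin d) (Fin d) ℝ)
    (hRi : ∀ i, IsOrthoMat (Ri i))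
    (hblk : ∀ i, blockOf X i (C i) = ηi i • Ri i) :
    inp (buildV Ri (fun i j => if j = C i then 1 else 0)) X = ∑ i, ηi i * d := by
  classical
  refine (buildV_inp_X Ri _ X).trans ?_
  refine Finset.sum_congr rfl fun i _ => ?_
  simp only [ite_mul, one_mul, zero_mul]
  rw [Finset.sum_ite_eq' Finset.univ (C i)
    (fun j => ∑ a, ∑ b, Ri i a b * X (i, a) (j, b))]
  simp only [Finset.mem_univ, if_true]
  have hX : ∀ a b, X (i, a) (C i, b) = ηi i * Ri i a b := by
    intro a b
    have h := congrFun (congrFun (hblk i) a) b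
    simpa [blockOf, Matrix.smul_apply, smul_eq_mul] using h
  calc ∑ a, ∑ b, Ri i a b * X (i, a) (C i, b)
      = ∑ a, ∑ b, ηi i * (Ri i a b * Ri i a b) := by
        refine Finset.sum_congr rfl fun a _ => Finset.sum_congr rfl fun b _ => ?_
        rw [hX a b]; ring
    _ = ηi i * ∑ a, ∑ b, Ri i a b * Ri i a b := by
        rw [Finset.mul_sum]
        exact Finset.sum_congr rfl fun a _ => (Finset.mul_sum _ _ _).symm
    _ = ηi i * d := by rw [ortho_sum_mul (hRi i)]

end AuxLemmas

set_option maxHeartbeats 1000000 in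
private lemma proj_eq_W0 {n K d m : ℕ}
    (X : Matrix (Fin n × Fin d) (Fin K × Fin d) ℝ) (C : Fin n → Fin K)
    (δ η : ℝ) (hδ : 0 < δ) (hη : 0 < η)
    (hsep : ∀ i j, j ≠ C i → δ ≤ muMap X i (C i) - muMap X i j)
    (ηi : Fin n → ℝ) (Ri : Fin n → Matrix (Fin d) (Fin d) ℝ)
    (hηi : ∀ i, η ≤ ηi i) (hRi : ∀ i, IsOrthoMat (Ri i))
    (hblk : ∀ i, blockOf X i (C i) = ηi i • Ri i)
    (RW : Fin n → Matrix (Fin d) (Fin d) ℝ) (HW : Matrix (Fin n) (Fin K) ℝ)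
    (hRWo : ∀ i, IsOrthoMat (RW i)) (hHW : IsClusteringMatrix m HW)
    (hHCc : IsClusteringMatrix m (fun i j => if j = C i then (1:ℝ) else 0))
    (hWmin : ∀ W'', InF m W'' → frobNorm (buildV RW HW - X) ≤ frobNorm (W'' - X)) :
    RW = Ri ∧ HW = (fun i j => if j = C i then (1:ℝ) else 0) := by
  classical
  have hηi0 : ∀ i, 0 ≤ ηi i := fun i => le_trans (le_of_lt hη) (hηi i)
  set HC : Matrix (Fin n) (Fin K) ℝ := fun i j => if j = C i then 1 else 0 with hHCdef
  have hW0feas : InF m (buildV Ri HC) := ⟨Ri, HC, hRi, hHCc, rfl⟩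
  have hnW : inp (buildV RW HW) (buildV RW HW) = (n : ℝ) * d := buildV_norm hRWo hHW
  have hnW0 : inp (buildV Ri HC) (buildV Ri HC) = (n : ℝ) * d := buildV_norm hRi hHCc
  have hW0val : inp (buildV Ri HC) X = ∑ i, ηi i * d := inp_W0 X C ηi Ri hRi hblk
  have hIW : inp (buildV Ri HC) X ≤ inp (buildV RW HW) X :=
    min_to_inner (hnW.trans hnW0.symm) (hWmin _ hW0feas)
  have hWup := inner_upper X C δ hsep ηi Ri hηi0 hRi hblk RW HW hRWo hHW
  have hτle : ∀ i, (∑ a, ∑ b, RW i a b * Ri i a b) ≤ (d : ℝ) :=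
    fun i => ortho_inner_le (hRWo i) (hRi i)
  have hg0 : ∀ i ∈ Finset.univ, (0 : ℝ) ≤ ηi i * d
      - (HW i (C i) * (ηi i * (∑ a, ∑ b, RW i a b * Ri i a b))
        + (1 - HW i (C i)) * (ηi i * d - δ)) := by
    intro i _
    rcases hHW.1 i (C i) with h | h <;> rw [h]
    · linarith [hδ]
    · nlinarith [hτle i, hηi0 i]
  have hgsum : ∑ i, (ηi i * d
      - (HW i (C i) * (ηi i * (∑ a, ∑ b, RW i a b * Ri i a b))
        + (1 - HW i (C i)) * (ηi i * d - δ))) = 0 := by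
    apply le_antisymm
    · rw [Finset.sum_sub_distrib]
      have h3 : ∑ i, ηi i * (d : ℝ) ≤ inp (buildV RW HW) X := hW0val ▸ hIW
      linarith [le_trans h3 hWup]
    · exact Finset.sum_nonneg hg0
  have hzero := (Finset.sum_eq_zero_iff_of_nonneg hg0).mp hgsum
  have hHW1 : ∀ i, HW i (C i) = 1 := by
    intro i
    rcases hHW.1 i (C i) with h | h
    · exfalso
      have hz := hzero i (Finset.mem_univ i)
      rw [h] at hz
      linarith [hδ]
    · exact h
  have hτd : ∀ i, (∑ a, ∑ b, RW i a b * Ri i a b) = (d : ℝ) := by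
    intro i
    have hz := hzero i (Finset.mem_univ i)
    rw [hHW1 i] at hz
    have hpos : 0 < ηi i := lt_of_lt_of_le hη (hηi i)
    have h5 : ηi i * (∑ a, ∑ b, RW i a b * Ri i a b) = ηi i * d := by linarith [hz]
    exact mul_left_cancel₀ (ne_of_gt hpos) h5
  have hRWeq : RW = Ri := by
    funext i
    have hdz : ∑ a, ∑ b, (RW i a b - Ri i a b) * (RW i a b - Ri i a b) = 0 := by
      rw [sum2_expand' (RW i) (Ri i), ortho_sum_mul (hRWo i), ortho_sum_mul (hRi i), hτd i]
      ring
    have h6 := (Finset.sum_eq_zero_iff_of_nonneg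
      (fun a _ => Finset.sum_nonneg fun b _ => mul_self_nonneg _)).mp hdz
    ext a b
    have h7 := (Finset.sum_eq_zero_iff_of_nonneg
      (fun b _ => mul_self_nonneg _)).mp (h6 a (Finset.mem_univ a)) b (Finset.mem_univ b)
    exact sub_eq_zero.mp (mul_self_eq_zero.mp h7)
  have hHWeq : HW = HC := by
    ext i j
    by_cases h : j = C i
    · subst h
      rw [hHW1 i]
      simp [hHCdef]
    · have hrow : HW i (C i) + ∑ j ∈ Finset.univ.erase (C i), HW i j = 1 := by
        rw [← hHW.2.1 i]
        exact Finset.add_sum_erase Finset.univ (fun j => HW i j) (Finset.mem_univ (C i))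
      rw [hHW1 i] at hrow
      have hsum0 : ∑ j ∈ Finset.univ.erase (C i), HW i j = 0 := by linarith
      have hnn : ∀ j ∈ Finset.univ.erase (C i), 0 ≤ HW i j := fun j _ => by
        rcases hHW.1 i j with h' | h' <;> rw [h'] <;> norm_num
      have hj0 := (Finset.sum_eq_zero_iff_of_nonneg hnn).mp hsum0 j
        (Finset.mem_erase.mpr ⟨h, Finset.mem_univ j⟩)
      rw [hj0]
      simp [hHCdef, h]
  exact ⟨hRWeq, hHWeq⟩

set_option maxHeartbeats 1000000 in
/-- Lipschitz-like property of the projection onto `F`.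
If `μ(X)` is `δ`-separated along a clustering `C` with clusters of size `m`,
and each block `X_{i C(i)} = ηᵢ • Rᵢ` with `ηᵢ ≥ η > 0` and `Rᵢ ∈ O(d)`, then
for any `X'`, any minimizer `W` of `‖· - X‖_F` over `F` and any minimizer `W'`
of `‖· - X'‖_F` over `F` satisfy
`‖W - W'‖_F ≤ 2 √(d²/δ² + 1/η²) ‖X - X'‖_F`. -/
theorem stmt10 {n K d m : ℕ}
    (X X' : Matrix (Fin n × Fin d) (Fin K × Fin d) ℝ)
    (C : Fin n → Fin K)
    (hsize : ∀ j, (Finset.univ.filter fun i => C i = j).card = m)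
    (δ η : ℝ) (hδ : 0 < δ) (hη : 0 < η)
    (hsep : ∀ i j, j ≠ C i → δ ≤ muMap X i (C i) - muMap X i j)
    (ηi : Fin n → ℝ) (Ri : Fin n → Matrix (Fin d) (Fin d) ℝ)
    (hηi : ∀ i, η ≤ ηi i) (hRi : ∀ i, IsOrthoMat (Ri i))
    (hblk : ∀ i, blockOf X i (C i) = ηi i • Ri i)
    (W W' : Matrix (Fin n × Fin d) (Fin K × Fin d) ℝ)
    (hW : InF m W) (hWmin : ∀ W'', InF m W'' → frobNorm (W - X) ≤ frobNorm (W'' - X))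
    (hW' : InF m W')
    (hW'min : ∀ W'', InF m W'' → frobNorm (W' - X') ≤ frobNorm (W'' - X')) :
    frobNorm (W - W') ≤
      2 * Real.sqrt ((d : ℝ)^2 / δ^2 + 1 / η^2) * frobNorm (X - X') := by
  classical
  have hηi0 : ∀ i, 0 ≤ ηi i := fun i => le_trans (le_of_lt hη) (hηi i)
  obtain ⟨RW, HW, hRWo, hHW, hWeq⟩ := hW
  obtain ⟨RV, HV, hRVo, hHV, hW'eq⟩ := hW'
  subst hWeq
  subst hW'eq
  set HC : Matrix (Fin n) (Fin K) ℝ := fun i j => if j = C i then 1 else 0 with hHCdef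
  have hHCc : IsClusteringMatrix m HC := by
    refine ⟨fun i j => ?_, fun i => ?_, fun j => ?_⟩
    · by_cases h : j = C i
      · right; simp [hHCdef, h]
      · left; simp [hHCdef, h]
    · simp [hHCdef]
    · simp only [hHCdef]
      rw [Finset.sum_boole]
      have h2 : (Finset.univ.filter fun i => j = C i)
          = (Finset.univ.filter fun i => C i = j) := by
        ext x; simp [eq_comm]
      rw [h2, hsize j]
  have hW0feas : InF m (buildV Ri HC) := ⟨Ri, HC, hRi, hHCc, rfl⟩
  have hnV : inp (buildV RV HV) (buildV RV HV) = (n : ℝ) * d := buildV_norm hRVo hHV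
  have hnW0 : inp (buildV Ri HC) (buildV Ri HC) = (n : ℝ) * d := buildV_norm hRi hHCc
  have hW0val : inp (buildV Ri HC) X = ∑ i, ηi i * d := inp_W0 X C ηi Ri hRi hblk
  obtain ⟨hRWeq, hHWeq⟩ := proj_eq_W0 X C δ η hδ hη hsep ηi Ri hηi hRi hblk
    RW HW hRWo hHW hHCc hWmin
  rw [hRWeq, hHWeq]
  -- Part 2: comparison of the two projections
  have hIW' : inp (buildV Ri HC) X' ≤ inp (buildV RV HV) X' :=
    min_to_inner (hnV.trans hnW0.symm) (hW'min _ hW0feas)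
  have hVup := inner_upper X C δ hsep ηi Ri hηi0 hRi hblk RV HV hRVo hHV
  have hΔge : ∑ i, (ηi i * d
      - (HV i (C i) * (ηi i * (∑ a, ∑ b, RV i a b * Ri i a b))
        + (1 - HV i (C i)) * (ηi i * d - δ)))
      ≤ inp (buildV Ri HC) X - inp (buildV RV HV) X := by
    rw [Finset.sum_sub_distrib, ← hW0val]
    linarith [hVup]
  have hcs := inp_le_frob (buildV Ri HC - buildV RV HV) (X - X')
  have hlin := inp_sub_sub (buildV Ri HC) (buildV RV HV) X X'
  have hΔle : inp (buildV Ri HC) X - inp (buildV RV HV) X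
      ≤ frobNorm (buildV Ri HC - buildV RV HV) * frobNorm (X - X') := by
    linarith [hIW', hcs, hlin]
  have hWW' : inp (buildV Ri HC) (buildV RV HV)
      = ∑ i, HV i (C i) * (∑ a, ∑ b, RV i a b * Ri i a b) := by
    rw [buildV_inp]
    refine Finset.sum_congr rfl fun i _ => ?_
    have hHC : ∀ j, HC i j = if j = C i then (1 : ℝ) else 0 := fun j => rfl
    calc ∑ j, (HC i j * HV i j) * (∑ a, ∑ b, Ri i a b * RV i a b)
        = ∑ j, (if j = C i then HV i j * (∑ a, ∑ b, Ri i a b * RV i a b) else 0) := by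
          refine Finset.sum_congr rfl fun j _ => ?_
          rw [hHC j]
          by_cases h : j = C i <;> simp [h]
      _ = HV i (C i) * (∑ a, ∑ b, Ri i a b * RV i a b) := by
          rw [Finset.sum_ite_eq' Finset.univ (C i)]
          simp
      _ = HV i (C i) * (∑ a, ∑ b, RV i a b * Ri i a b) := by
          congr 1
          exact Finset.sum_congr rfl fun a _ => Finset.sum_congr rfl fun b _ => mul_comm _ _
  have hsplit2 : ∑ i, (2 * (d : ℝ) - 2 * (HV i (C i) * (∑ a, ∑ b, RV i a b * Ri i a b)))
      = 2 * ((n : ℝ) * d) - 2 * ∑ i, HV i (C i) * (∑ a, ∑ b, RV i a b * Ri i a b) := by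
    rw [Finset.sum_sub_distrib, Finset.sum_const, Finset.card_univ, Fintype.card_fin,
      nsmul_eq_mul,
      show (∑ i, 2 * (HV i (C i) * (∑ a, ∑ b, RV i a b * Ri i a b)))
        = 2 * ∑ i, HV i (C i) * (∑ a, ∑ b, RV i a b * Ri i a b) from
        (Finset.mul_sum _ _ _).symm]
    ring
  have ht2 : frobNorm (buildV Ri HC - buildV RV HV) ^ 2
      = ∑ i, (2 * (d : ℝ) - 2 * (HV i (C i) * (∑ a, ∑ b, RV i a b * Ri i a b))) := by
    rw [frob_sub_sq, hnW0, hnV, hWW', hsplit2]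
    ring
  set M := max (2 * (d : ℝ) / δ) (2 / η) with hMdef
  have hM1 : 2 * (d : ℝ) / δ ≤ M := le_max_left _ _
  have hM2 : 2 / η ≤ M := le_max_right _ _
  have hM0 : 0 ≤ M := le_trans (by positivity) hM2
  have hkey : ∀ i ∈ Finset.univ,
      2 * (d : ℝ) - 2 * (HV i (C i) * (∑ a, ∑ b, RV i a b * Ri i a b))
      ≤ M * (ηi i * d - (HV i (C i) * (ηi i * (∑ a, ∑ b, RV i a b * Ri i a b))
        + (1 - HV i (C i)) * (ηi i * d - δ))) := by
    intro i _
    have hτ'le : (∑ a, ∑ b, RV i a b * Ri i a b) ≤ (d : ℝ) :=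
      ortho_inner_le (hRVo i) (hRi i)
    have hηd : η ≤ ηi i := hηi i
    rcases hHV.1 i (C i) with h | h <;> rw [h]
    · have h8 : 2 * (d : ℝ) ≤ M * δ := by
        rw [div_le_iff₀ hδ] at hM1
        linarith
      linarith [h8]
    · have h9 : 2 ≤ M * η := by
        rw [div_le_iff₀ hη] at hM2
        linarith
      have h10 : 2 ≤ M * ηi i := le_trans h9 (mul_le_mul_of_nonneg_left hηd hM0)
      have h11 : (0 : ℝ) ≤ (M * ηi i - 2) * ((d : ℝ) - ∑ a, ∑ b, RV i a b * Ri i a b) :=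
        mul_nonneg (by linarith) (by linarith)
      nlinarith [h11]
  have hfin : frobNorm (buildV Ri HC - buildV RV HV) ^ 2
      ≤ M * (frobNorm (buildV Ri HC - buildV RV HV) * frobNorm (X - X')) := by
    calc frobNorm (buildV Ri HC - buildV RV HV) ^ 2
        = ∑ i, (2 * (d : ℝ) - 2 * (HV i (C i) * (∑ a, ∑ b, RV i a b * Ri i a b))) := ht2
      _ ≤ ∑ i, M * (ηi i * d - (HV i (C i) * (ηi i * (∑ a, ∑ b, RV i a b * Ri i a b))
            + (1 - HV i (C i)) * (ηi i * d - δ))) := Finset.sum_le_sum hkey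
      _ = M * ∑ i, (ηi i * d - (HV i (C i) * (ηi i * (∑ a, ∑ b, RV i a b * Ri i a b))
            + (1 - HV i (C i)) * (ηi i * d - δ))) := (Finset.mul_sum _ _ _).symm
      _ ≤ M * (inp (buildV Ri HC) X - inp (buildV RV HV) X) :=
          mul_le_mul_of_nonneg_left hΔge hM0
      _ ≤ M * (frobNorm (buildV Ri HC - buildV RV HV) * frobNorm (X - X')) :=
          mul_le_mul_of_nonneg_left hΔle hM0
  have ht0 : 0 ≤ frobNorm (buildV Ri HC - buildV RV HV) := Real.sqrt_nonneg _
  have he0 : 0 ≤ frobNorm (X - X') := Real.sqrt_nonneg _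
  have hc2 : M ≤ 2 * Real.sqrt ((d : ℝ) ^ 2 / δ ^ 2 + 1 / η ^ 2) := by
    have hrw : (d : ℝ) ^ 2 / δ ^ 2 + 1 / η ^ 2 = ((d : ℝ) / δ) ^ 2 + (1 / η) ^ 2 := by
      rw [div_pow, div_pow]
      norm_num
    have hA : (d : ℝ) / δ ≤ Real.sqrt ((d : ℝ) ^ 2 / δ ^ 2 + 1 / η ^ 2) := by
      rw [hrw]
      calc (d : ℝ) / δ = Real.sqrt (((d : ℝ) / δ) ^ 2) :=
            (Real.sqrt_sq (by positivity)).symm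
        _ ≤ _ := Real.sqrt_le_sqrt (by nlinarith [sq_nonneg (1 / η)])
    have hB : 1 / η ≤ Real.sqrt ((d : ℝ) ^ 2 / δ ^ 2 + 1 / η ^ 2) := by
      rw [hrw]
      calc 1 / η = Real.sqrt ((1 / η) ^ 2) := (Real.sqrt_sq (by positivity)).symm
        _ ≤ _ := Real.sqrt_le_sqrt (by nlinarith [sq_nonneg ((d : ℝ) / δ)])
    apply max_le
    · rw [show 2 * (d : ℝ) / δ = 2 * ((d : ℝ) / δ) from by ring]
      linarith [hA]
    · rw [show (2 : ℝ) / η = 2 * (1 / η) from by ring]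
      linarith [hB]
  rcases eq_or_lt_of_le ht0 with h | h
  · rw [← h]
    exact mul_nonneg (mul_nonneg (by norm_num) (Real.sqrt_nonneg _)) he0
  · have h3 : frobNorm (buildV Ri HC - buildV RV HV) * frobNorm (buildV Ri HC - buildV RV HV)
        ≤ (M * frobNorm (X - X')) * frobNorm (buildV Ri HC - buildV RV HV) := by
      nlinarith [hfin]
    have h4 : frobNorm (buildV Ri HC - buildV RV HV) ≤ M * frobNorm (X - X') :=
      le_of_mul_le_mul_right h3 h
    calc frobNorm (buildV Ri HC - buildV RV HV) ≤ M * frobNorm (X - X') := h4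
      _ ≤ 2 * Real.sqrt ((d : ℝ) ^ 2 / δ ^ 2 + 1 / η ^ 2) * frobNorm (X - X') :=
          mul_le_mul_of_nonneg_right hc2 he0
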